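/- Let U, Û ∈ ℝ^{p×d} have orthonormal columns, and let Ξ be the orthogonal d×d matrix minimizing ‖W − UᵀÛ‖_F over orthogonal W. Then ‖UᵀÛ − Ξ‖₂ ≤ ‖sin Θ(Û, U)‖₂², where sin Θ(Û,U) is the diagonal matrix of principal angle sines between the column spaces of Û and U. -/

import Mathlib

open Matrix
open scoped Matrix.Norms.L2Operator

noncomputable def l2 {n : ℕ} (v : Fin n → ℝ) : ℝ := Real.sqrt (∑ j, v j ^ 2)

/-- The spectral norm: sup of ‖Mx‖₂ over the ℓ₂ unit sphere. -/
noncomputable def spec {p₁ p₂ : ℕ} (M : Matrix (Fin p₁) (Fin p₂) ℝ) : ℝ :=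
  ⨆ x : {x : Fin p₂ → ℝ // l2 x = 1}, l2 (M.mulVec x.1)

/-- The Frobenius norm of a matrix. -/
noncomputable def frob {p₁ p₂ : ℕ} (M : Matrix (Fin p₁) (Fin p₂) ℝ) : ℝ :=
  Real.sqrt (∑ i, ∑ j, M i j ^ 2)

/-- The sin-Θ distance between the column spaces of `Û` and `U`:
`‖(I − UUᵀ) ÛÛᵀ‖₂`. -/
noncomputable def sinTheta {p d : ℕ} (Uhat U : Matrix (Fin p) (Fin d) ℝ) : ℝ :=
  spec ((1 - U * Uᵀ) * (Uhat * Uhatᵀ))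

/-! ### `l2` and `spec` basics -/

lemma l2_eq_norm {n : ℕ} (v : Fin n → ℝ) :
    l2 v = ‖(WithLp.equiv 2 (Fin n → ℝ)).symm v‖ := by
  rw [EuclideanSpace.norm_eq]
  simp [l2, sq_abs]

lemma l2_nonneg {n : ℕ} (v : Fin n → ℝ) : 0 ≤ l2 v := Real.sqrt_nonneg _

lemma l2_smul {n : ℕ} (a : ℝ) (v : Fin n → ℝ) : l2 (a • v) = |a| * l2 v := by
  rw [l2_eq_norm, l2_eq_norm, ← Real.norm_eq_abs, ← norm_smul a]
  congr 1

lemma mulVec_l2_le {p₁ p₂ : ℕ} (M : Matrix (Fin p₁) (Fin p₂) ℝ) (x : Fin p₂ → ℝ) :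
    l2 (M.mulVec x) ≤ ‖M‖ * l2 x := by
  rw [l2_eq_norm, l2_eq_norm]
  exact M.l2_opNorm_mulVec ((WithLp.equiv 2 (Fin p₂ → ℝ)).symm x)

lemma spec_bdd {p₁ p₂ : ℕ} (M : Matrix (Fin p₁) (Fin p₂) ℝ) :
    BddAbove (Set.range fun x : {x : Fin p₂ → ℝ // l2 x = 1} => l2 (M.mulVec x.1)) := by
  refine ⟨‖M‖, Set.forall_mem_range.2 fun x => ?_⟩
  simpa [x.2] using mulVec_l2_le M x.1

lemma le_spec {p₁ p₂ : ℕ} (M : Matrix (Fin p₁) (Fin p₂) ℝ) (x : Fin p₂ → ℝ)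
    (hx : l2 x = 1) : l2 (M.mulVec x) ≤ spec M :=
  le_ciSup (spec_bdd M) (⟨x, hx⟩ : {x : Fin p₂ → ℝ // l2 x = 1})

lemma spec_nonneg {p₁ p₂ : ℕ} (M : Matrix (Fin p₁) (Fin p₂) ℝ) : 0 ≤ spec M :=
  Real.iSup_nonneg fun _ => l2_nonneg _

lemma mulVec_l2_le_spec {p₁ p₂ : ℕ} (M : Matrix (Fin p₁) (Fin p₂) ℝ) (x : Fin p₂ → ℝ) :
    l2 (M.mulVec x) ≤ spec M * l2 x := by
  rcases eq_or_ne (l2 x) 0 with h0 | h0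
  · have : x = 0 := by
      have := h0
      rw [l2_eq_norm, norm_eq_zero] at this
      simpa using congrArg (WithLp.equiv 2 (Fin p₂ → ℝ)) this
    simp [this, l2, Matrix.mulVec_zero]
  · have hpos : 0 < l2 x := lt_of_le_of_ne (l2_nonneg x) (Ne.symm h0)
    have hy : l2 ((l2 x)⁻¹ • x) = 1 := by
      rw [l2_smul, abs_of_pos (by positivity)]
      field_simp
    have := le_spec M _ hy
    rw [Matrix.mulVec_smul, l2_smul, abs_of_pos (by positivity)] at this
    calc l2 (M.mulVec x) = l2 x * ((l2 x)⁻¹ * l2 (M.mulVec x)) := by field_simp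
    _ ≤ l2 x * spec M := by nlinarith [l2_nonneg (M.mulVec x)]
    _ = spec M * l2 x := mul_comm _ _

lemma spec_eq_norm {p₁ p₂ : ℕ} (M : Matrix (Fin p₁) (Fin p₂) ℝ) : spec M = ‖M‖ := by
  apply le_antisymm
  · rcases isEmpty_or_nonempty {x : Fin p₂ → ℝ // l2 x = 1} with h | h
    · rw [spec, Real.iSup_of_isEmpty]
      positivity
    · refine ciSup_le fun x => ?_
      simpa [x.2] using mulVec_l2_le M x.1
  · rw [l2_opNorm_def]
    refine ContinuousLinearMap.opNorm_le_bound _ (spec_nonneg M) fun x => ?_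
    have := mulVec_l2_le_spec M (WithLp.equiv 2 (Fin p₂ → ℝ) x)
    rw [l2_eq_norm, l2_eq_norm] at this
    simpa [Matrix.toEuclideanLin_apply] using this

lemma conjT_eq_transpose {a b : ℕ} (B : Matrix (Fin a) (Fin b) ℝ) : Bᴴ = Bᵀ := by
  ext k l
  simp [conjTranspose_apply]

lemma orth_norm_le_one {a b : ℕ} (B : Matrix (Fin a) (Fin b) ℝ) (h : Bᵀ * B = 1) :
    ‖B‖ ≤ 1 := by
  have h1 : ‖B‖ * ‖B‖ = ‖(1 : Matrix (Fin b) (Fin b) ℝ)‖ := by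
    rw [← Matrix.l2_opNorm_conjTranspose_mul_self, conjT_eq_transpose, h]
  have hone : ‖(1 : Matrix (Fin b) (Fin b) ℝ)‖ ≤ 1 := by
    rw [Matrix.cstar_norm_def, _root_.map_one]
    exact ContinuousLinearMap.norm_id_le
  nlinarith [norm_nonneg B]

/-! ### dot product computations -/

lemma mulVec_dot {a b : ℕ} (M : Matrix (Fin a) (Fin b) ℝ) (x : Fin b → ℝ) (z : Fin a → ℝ) :
    (M *ᵥ x) ⬝ᵥ z = x ⬝ᵥ (Mᵀ *ᵥ z) := by
  rw [dotProduct_comm, Matrix.dotProduct_mulVec, ← Matrix.mulVec_transpose,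
    dotProduct_comm]

lemma l2_sq_eq_dot {n : ℕ} (v : Fin n → ℝ) : l2 v ^ 2 = v ⬝ᵥ v := by
  rw [l2, Real.sq_sqrt (by positivity)]
  simp [dotProduct, sq]

lemma l2_mulVec_sq {a b : ℕ} (M : Matrix (Fin a) (Fin b) ℝ) (x : Fin b → ℝ) :
    l2 (M *ᵥ x) ^ 2 = x ⬝ᵥ ((Mᵀ * M) *ᵥ x) := by
  rw [l2_sq_eq_dot, mulVec_dot, Matrix.mulVec_mulVec]

/-! ### trace inequality from the Frobenius minimization -/

lemma sum_sq_of_orth {d : ℕ} {W : Matrix (Fin d) (Fin d) ℝ} (h : W * Wᵀ = 1) :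
    ∑ i, ∑ j, W i j ^ 2 = d := by
  have h2 := congrArg Matrix.trace h
  rw [Matrix.trace_one] at h2
  simp only [Matrix.trace, Matrix.diag, Matrix.mul_apply, Matrix.transpose_apply] at h2
  simpa [sq] using h2

lemma sum_mul_eq_trace {d : ℕ} (W A : Matrix (Fin d) (Fin d) ℝ) :
    ∑ i, ∑ j, W i j * A i j = Matrix.trace (Wᵀ * A) := by
  simp only [Matrix.trace, Matrix.diag, Matrix.mul_apply, Matrix.transpose_apply]
  exact Finset.sum_comm

lemma trace_ineq {d : ℕ} (A Ξ : Matrix (Fin d) (Fin d) ℝ)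
    (hΞ : Ξ * Ξᵀ = 1)
    (hmin : ∀ W : Matrix (Fin d) (Fin d) ℝ, W * Wᵀ = 1 →
      frob (Ξ - A) ≤ frob (W - A)) :
    ∀ Q : Matrix (Fin d) (Fin d) ℝ, Q * Qᵀ = 1 →
      Matrix.trace (Q * (Ξᵀ * A)) ≤ Matrix.trace (Ξᵀ * A) := by
  intro Q hQ
  set W := Ξ * Qᵀ with hW
  have hWo : W * Wᵀ = 1 := by
    rw [hW, Matrix.transpose_mul, Matrix.transpose_transpose, Matrix.mul_assoc,
      ← Matrix.mul_assoc Qᵀ Q Ξᵀ, mul_eq_one_comm.mp hQ, Matrix.one_mul, hΞ]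
  have h := hmin W hWo
  have hsum : ∑ i, ∑ j, (Ξ - A) i j ^ 2 ≤ ∑ i, ∑ j, (W - A) i j ^ 2 := by
    have h1 : (0:ℝ) ≤ ∑ i, ∑ j, (Ξ - A) i j ^ 2 := by positivity
    have h2 : (0:ℝ) ≤ ∑ i, ∑ j, (W - A) i j ^ 2 := by positivity
    calc ∑ i, ∑ j, (Ξ - A) i j ^ 2 = frob (Ξ - A) ^ 2 := (Real.sq_sqrt h1).symm
    _ ≤ frob (W - A) ^ 2 := by
        have hf : (0:ℝ) ≤ frob (Ξ - A) := Real.sqrt_nonneg _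
        nlinarith
    _ = ∑ i, ∑ j, (W - A) i j ^ 2 := Real.sq_sqrt h2
  have expand : ∀ B : Matrix (Fin d) (Fin d) ℝ, B * Bᵀ = 1 →
      ∑ i, ∑ j, (B - A) i j ^ 2
        = (d : ℝ) - 2 * (∑ i, ∑ j, B i j * A i j) + ∑ i, ∑ j, A i j ^ 2 := by
    intro B hB
    have : ∀ i j, (B - A) i j ^ 2 = B i j ^2 - 2 * (B i j * A i j) + A i j ^2 := by
      intro i j; rw [Matrix.sub_apply]; ring
    simp only [this, Finset.sum_add_distrib, Finset.sum_sub_distrib, ← Finset.mul_sum,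
      sum_sq_of_orth hB]
    try ring
  rw [expand Ξ hΞ, expand W hWo] at hsum
  have : ∑ i, ∑ j, W i j * A i j ≤ ∑ i, ∑ j, Ξ i j * A i j := by linarith
  rw [sum_mul_eq_trace, sum_mul_eq_trace] at this
  calc Matrix.trace (Q * (Ξᵀ * A)) = Matrix.trace (Wᵀ * A) := by
        rw [hW, Matrix.transpose_mul, Matrix.transpose_transpose, Matrix.mul_assoc]
  _ ≤ Matrix.trace (Ξᵀ * A) := this

/-! ### rotation matrices -/

section rot
variable {d : ℕ} (i j : Fin d)

noncomputable def rotP : Matrix (Fin d) (Fin d) ℝ :=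
  single i i 1 + single j j 1

noncomputable def rotK : Matrix (Fin d) (Fin d) ℝ :=
  single j i 1 - single i j 1

noncomputable def rotR (t : ℝ) : Matrix (Fin d) (Fin d) ℝ :=
  1 + (Real.cos t - 1) • rotP i j + Real.sin t • rotK i j

lemma rotP_mul_rotP (hij : i ≠ j) : rotP i j * rotP i j = rotP i j := by
  simp [rotP, add_mul, mul_add, single_mul_single_same,
    single_mul_single_of_ne, hij, Ne.symm hij]

lemma rotP_mul_rotK (hij : i ≠ j) : rotP i j * rotK i j = rotK i j := by
  simp [rotP, rotK, add_mul, mul_add, mul_sub, single_mul_single_same,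
    single_mul_single_of_ne, hij, Ne.symm hij]

lemma rotK_mul_rotP (hij : i ≠ j) : rotK i j * rotP i j = rotK i j := by
  simp only [rotP, rotK, add_mul, mul_add, sub_mul, single_mul_single_same,
    single_mul_single_of_ne, hij, Ne.symm hij, ne_eq, not_false_iff, mul_one, one_mul]
  simp [single_mul_single_of_ne, hij, Ne.symm hij]
  abel

lemma rotK_mul_rotK (hij : i ≠ j) : rotK i j * rotK i j = -(rotP i j) := by
  simp only [rotP, rotK, sub_mul, mul_sub, single_mul_single_same, one_mul]
  rw [single_mul_single_of_ne (i := j) (j := i) (k := j) (h := hij),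
    single_mul_single_of_ne (i := i) (j := j) (k := i) (h := Ne.symm hij)]
  abel

lemma rotR_transpose (t : ℝ) : (rotR i j t)ᵀ = rotR i j (-t) := by
  have hE : ∀ a b : Fin d, (single a b (1:ℝ))ᵀ = single b a 1 := by
    intro a b
    ext k l
    simp [single, transpose_apply, and_comm]
  simp only [rotR, rotP, rotK, transpose_add, transpose_smul, transpose_one, transpose_sub,
    hE, Real.cos_neg, Real.sin_neg]
  module

lemma rotR_mul_orth (hij : i ≠ j) (t : ℝ) : rotR i j t * (rotR i j t)ᵀ = 1 := by
  rw [rotR_transpose]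
  have hcos : Real.cos (-t) = Real.cos t := Real.cos_neg t
  have hsin : Real.sin (-t) = -Real.sin t := Real.sin_neg t
  rw [rotR, rotR, hcos, hsin]
  set a := Real.cos t - 1 with ha
  set b := Real.sin t with hb
  have expand : (1 + a • rotP i j + b • rotK i j) * (1 + a • rotP i j + (-b) • rotK i j)
      = 1 + (a + a + a*a + b*b) • rotP i j
        + (b + (-b) + a*(-b) + b*a) • rotK i j := by
    simp only [mul_add, add_mul, one_mul, mul_one, smul_mul_assoc, mul_smul_comm, smul_smul,
      rotP_mul_rotP i j hij, rotP_mul_rotK i j hij, rotK_mul_rotP i j hij,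
      rotK_mul_rotK i j hij]
    module
  rw [expand]
  have h1 : a + a + a*a + b*b = 0 := by
    have h := Real.sin_sq_add_cos_sq t
    rw [ha, hb]; nlinarith
  have h2 : b + (-b) + a*(-b) + b*a = 0 := by ring
  rw [h1, h2]
  simp

lemma trace_stdBasis_mul {d : ℕ} (a b : Fin d) (S : Matrix (Fin d) (Fin d) ℝ) :
    Matrix.trace (single a b (1:ℝ) * S) = S b a := by
  rw [Matrix.trace, Finset.sum_eq_single a]
  · simp
  · intro k _ hk
    simp [Matrix.diag, hk]
  · simp

lemma trace_rotR_mul {d : ℕ} (i j : Fin d) (t : ℝ) (S : Matrix (Fin d) (Fin d) ℝ) :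
    Matrix.trace (rotR i j t * S)
      = Matrix.trace S + (Real.cos t - 1) * (S i i + S j j)
        + Real.sin t * (S i j - S j i) := by
  simp only [rotR, rotP, rotK, add_mul, sub_mul, one_mul, smul_mul_assoc, trace_add,
    trace_smul, trace_sub, trace_stdBasis_mul, smul_eq_mul]
  try ring

end rot

/-! ### symmetry from the trace condition -/

lemma symm_of_trace_cond {d : ℕ} (S : Matrix (Fin d) (Fin d) ℝ)
    (htr : ∀ Q : Matrix (Fin d) (Fin d) ℝ, Q * Qᵀ = 1 →
      Matrix.trace (Q * S) ≤ Matrix.trace S) : Sᵀ = S := by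
  ext i j
  rw [Matrix.transpose_apply]
  rcases eq_or_ne i j with rfl | hij
  · rfl
  set f : ℝ → ℝ := fun t =>
    -((Real.cos t - 1) * (S j j + S i i) + Real.sin t * (S j i - S i j)) with hf
  have hmin : ∀ t, f 0 ≤ f t := by
    intro t
    have := htr (rotR j i t) (rotR_mul_orth j i hij.symm t)
    rw [trace_rotR_mul] at this
    simp only [hf]
    simp only [Real.cos_zero, Real.sin_zero]
    nlinarith
  have hlm : IsLocalMin f 0 := by
    refine IsMinOn.isLocalMin (fun t _ => hmin t) Filter.univ_mem
  have hder : HasDerivAt f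
      (-((-Real.sin 0) * (S j j + S i i) + Real.cos 0 * (S j i - S i j))) 0 := by
    have hc : HasDerivAt (fun t => Real.cos t - 1) (-Real.sin 0) 0 :=
      (Real.hasDerivAt_cos 0).sub_const 1
    have hs : HasDerivAt Real.sin (Real.cos 0) 0 := Real.hasDerivAt_sin 0
    exact ((hc.mul_const _).add (hs.mul_const _)).neg
  have h0 := hlm.deriv_eq_zero
  rw [hder.deriv] at h0
  simp only [Real.sin_zero, Real.cos_zero, neg_zero, zero_mul, one_mul, zero_add, neg_eq_zero] at h0
  linarith

lemma l2_eq_sqrt_dot {n : ℕ} (v : Fin n → ℝ) : l2 v = Real.sqrt (v ⬝ᵥ v) := by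
  simp [l2, dotProduct, sq]

lemma spec_diagonal_le {d : ℕ} (v : Fin d → ℝ) (c : ℝ) (hc : 0 ≤ c)
    (h : ∀ i, |v i| ≤ c) : ‖(diagonal v : Matrix (Fin d) (Fin d) ℝ)‖ ≤ c := by
  rw [← spec_eq_norm]
  refine Real.iSup_le (fun x => ?_) hc
  have key : ∑ j, ((diagonal v *ᵥ x.1) j) ^ 2 ≤ c ^ 2 * ∑ j, x.1 j ^ 2 := by
    rw [Finset.mul_sum]
    refine Finset.sum_le_sum fun j _ => ?_
    rw [Matrix.mulVec_diagonal]
    have h1 : v j ^ 2 ≤ c ^ 2 := by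
      have := h j
      nlinarith [abs_nonneg (v j), sq_abs (v j)]
    nlinarith [sq_nonneg (x.1 j), sq_nonneg (v j * x.1 j)]
  have hx2 : ∑ j, x.1 j ^ 2 = 1 := by
    have := x.2
    rw [l2] at this
    have h0 : (0:ℝ) ≤ ∑ j, x.1 j ^ 2 := by positivity
    nlinarith [Real.sq_sqrt h0]
  calc l2 (diagonal v *ᵥ x.1) = Real.sqrt (∑ j, ((diagonal v *ᵥ x.1) j) ^ 2) := rfl
  _ ≤ Real.sqrt (c ^ 2 * ∑ j, x.1 j ^ 2) := Real.sqrt_le_sqrt key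
  _ = c := by rw [hx2, mul_one, Real.sqrt_sq hc]

set_option maxHeartbeats 1000000 in
/-- If `Ξ` is the orthogonal matrix minimizing `‖W − UᵀÛ‖_F` over orthogonal `W`,
then `‖UᵀÛ − Ξ‖₂ ≤ ‖sin Θ(Û, U)‖₂²`. -/
theorem stmt10 {p d : ℕ} (U Uhat : Matrix (Fin p) (Fin d) ℝ)
    (Ξ : Matrix (Fin d) (Fin d) ℝ)
    (hU : Uᵀ * U = 1) (hUhat : Uhatᵀ * Uhat = 1)
    (hΞ : Ξ * Ξᵀ = 1)
    (hmin : ∀ W : Matrix (Fin d) (Fin d) ℝ, W * Wᵀ = 1 →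
      frob (Ξ - Uᵀ * Uhat) ≤ frob (W - Uᵀ * Uhat)) :
    spec (Uᵀ * Uhat - Ξ) ≤ sinTheta Uhat U ^ 2 := by
  rcases Nat.eq_zero_or_pos d with rfl | hd
  · haveI : IsEmpty {x : Fin 0 → ℝ // l2 x = 1} :=
      ⟨fun x => by have := x.2; simp [l2] at this⟩
    rw [spec, Real.iSup_of_isEmpty]
    exact sq_nonneg _
  set A := Uᵀ * Uhat with hA
  set S := Ξᵀ * A with hS
  have hΞ' : Ξᵀ * Ξ = 1 := mul_eq_one_comm.mp hΞ
  have htr := trace_ineq A Ξ hΞ hmin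
  have hsym : Sᵀ = S := symm_of_trace_cond S htr
  have hherm : S.IsHermitian := by
    show Sᴴ = S
    rw [conjT_eq_transpose]
    exact hsym
  set V : Matrix (Fin d) (Fin d) ℝ := (hherm.eigenvectorUnitary : Matrix (Fin d) (Fin d) ℝ)
    with hV
  set μ : Fin d → ℝ := hherm.eigenvalues with hμ
  have hVstar : star V = Vᵀ := by
    rw [Matrix.star_eq_conjTranspose, conjT_eq_transpose]
  have hV2 : Vᵀ * V = 1 := by
    rw [← hVstar]
    exact Unitary.coe_star_mul_self hherm.eigenvectorUnitary
  have hV1 : V * Vᵀ = 1 := mul_eq_one_comm.mp hV2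
  have hSVD : S = V * diagonal μ * Vᵀ := by
    have := hherm.spectral_theorem
    rwa [RCLike.ofReal_real_eq_id, Function.id_comp, Unitary.conjStarAlgAut_apply, hVstar] at this
  -- eigenvectors
  set y : Fin d → (Fin d → ℝ) := fun i => V *ᵥ Pi.single i 1 with hy
  have hSy : ∀ i, S *ᵥ y i = μ i • y i := by
    intro i
    have hSV : S * V = V * diagonal μ := by
      rw [hSVD, Matrix.mul_assoc, Matrix.mul_assoc, hV2, Matrix.mul_one]
    have hsingle : (Pi.single i (μ i * 1) : Fin d → ℝ) = μ i • (Pi.single i 1 : Fin d → ℝ) := by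
      funext j
      simp [Pi.single_apply, mul_ite]
    rw [hy, Matrix.mulVec_mulVec, hSV, ← Matrix.mulVec_mulVec,
      Matrix.diagonal_mulVec_single, hsingle, Matrix.mulVec_smul]
  have hydot : ∀ i, y i ⬝ᵥ y i = 1 := by
    intro i
    rw [hy]
    rw [mulVec_dot, Matrix.mulVec_mulVec, hV2, Matrix.one_mulVec]
    simp [dotProduct, Pi.single_apply]
  have hyl2 : ∀ i, l2 (y i) = 1 := by
    intro i
    rw [l2_eq_sqrt_dot, hydot i, Real.sqrt_one]
  -- norms
  have hnU : ‖U‖ ≤ 1 := orth_norm_le_one U hU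
  have hnUhat : ‖Uhat‖ ≤ 1 := orth_norm_le_one Uhat hUhat
  have hnUt : ‖Uᵀ‖ ≤ 1 := by
    rw [← conjT_eq_transpose, Matrix.l2_opNorm_conjTranspose]; exact hnU
  have hnΞ : ‖Ξ‖ ≤ 1 := orth_norm_le_one Ξ hΞ'
  have hnΞt : ‖Ξᵀ‖ ≤ 1 := by
    rw [← conjT_eq_transpose, Matrix.l2_opNorm_conjTranspose]; exact hnΞ
  have hnV : ‖V‖ ≤ 1 := orth_norm_le_one V hV2
  have hnVt : ‖Vᵀ‖ ≤ 1 := by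
    rw [← conjT_eq_transpose, Matrix.l2_opNorm_conjTranspose]; exact hnV
  have hnA : ‖A‖ ≤ 1 := by
    calc ‖A‖ ≤ ‖Uᵀ‖ * ‖Uhat‖ := Matrix.l2_opNorm_mul Uᵀ Uhat
    _ ≤ 1 := by nlinarith [norm_nonneg Uᵀ, norm_nonneg Uhat]
  have hnS : ‖S‖ ≤ 1 := by
    calc ‖S‖ ≤ ‖Ξᵀ‖ * ‖A‖ := Matrix.l2_opNorm_mul Ξᵀ A
    _ ≤ 1 := by nlinarith [norm_nonneg Ξᵀ, norm_nonneg A]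
  -- eigenvalues are ≤ 1
  have hμle : ∀ i, μ i ≤ 1 := by
    intro i
    have h1 : l2 (S *ᵥ y i) ≤ ‖S‖ * l2 (y i) := mulVec_l2_le S (y i)
    rw [hSy i, l2_smul, hyl2 i, mul_one, mul_one] at h1
    have := le_trans h1 hnS
    exact le_of_abs_le this
  -- eigenvalues are ≥ 0
  have hμpos : ∀ i, 0 ≤ μ i := by
    intro i
    set ε : Fin d → ℝ := fun k => if k = i then (-1:ℝ) else 1 with hε
    have hde : diagonal ε * diagonal ε = (1 : Matrix (Fin d) (Fin d) ℝ) := by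
      rw [Matrix.diagonal_mul_diagonal]
      have hfun : (fun k => ε k * ε k) = fun _ => (1:ℝ) := by
        funext k
        by_cases h : k = i <;> simp [hε, h]
      rw [hfun, Matrix.diagonal_one]
    set Q : Matrix (Fin d) (Fin d) ℝ := V * diagonal ε * Vᵀ with hQdef
    have hQt : Qᵀ = Q := by
      rw [hQdef, Matrix.transpose_mul, Matrix.transpose_mul, Matrix.transpose_transpose,
        Matrix.diagonal_transpose, Matrix.mul_assoc]
    have hQ : Q * Qᵀ = 1 := by
      rw [hQt, hQdef]
      calc V * diagonal ε * Vᵀ * (V * diagonal ε * Vᵀ)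
          = V * diagonal ε * (Vᵀ * V) * (diagonal ε * Vᵀ) := by
            simp only [Matrix.mul_assoc]
      _ = V * (diagonal ε * diagonal ε) * Vᵀ := by
            rw [hV2, Matrix.mul_one]
            simp only [Matrix.mul_assoc]
      _ = 1 := by rw [hde, Matrix.mul_one, hV1]
    have htrQ : Matrix.trace (Q * S) = ∑ k, ε k * μ k := by
      calc Matrix.trace (Q * S)
          = Matrix.trace (V * diagonal ε * (Vᵀ * V) * (diagonal μ * Vᵀ)) := by
            rw [hQdef, hSVD]; simp only [Matrix.mul_assoc]
      _ = Matrix.trace (V * (diagonal ε * diagonal μ) * Vᵀ) := by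
            rw [hV2, Matrix.mul_one]; simp only [Matrix.mul_assoc]
      _ = ∑ k, ε k * μ k := by
            rw [Matrix.trace_mul_comm, ← Matrix.mul_assoc, hV2, Matrix.one_mul,
              Matrix.diagonal_mul_diagonal, Matrix.trace_diagonal]
    have htrS : Matrix.trace S = ∑ k, μ k := by
      calc Matrix.trace S = Matrix.trace (V * diagonal μ * Vᵀ) := by rw [← hSVD]
      _ = ∑ k, μ k := by
            rw [Matrix.trace_mul_comm, ← Matrix.mul_assoc, hV2, Matrix.one_mul,
              Matrix.trace_diagonal]
    have h := htr Q hQ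
    rw [htrQ, htrS] at h
    have hsplit : ∑ k, ε k * μ k = (∑ k, μ k) - 2 * μ i := by
      have : ∀ k ∈ Finset.univ, ε k * μ k = μ k - (if k = i then 2 * μ k else 0) := by
        intro k _
        rw [hε]
        by_cases h : k = i <;> simp [h] <;> ring
      rw [Finset.sum_congr rfl this, Finset.sum_sub_distrib, Finset.sum_ite_eq' Finset.univ i]
      simp
    rw [hsplit] at h
    linarith
  -- minimal eigenvalue
  obtain ⟨i₀, -, hmin'⟩ := Finset.exists_min_image Finset.univ μ ⟨⟨0, hd⟩, Finset.mem_univ _⟩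
  set t := μ i₀ with ht
  have ht0 : 0 ≤ t := hμpos i₀
  have ht1 : t ≤ 1 := hμle i₀
  -- Part I : spec (A - Ξ) ≤ 1 - t
  have hAΞ : A - Ξ = Ξ * (S - 1) := by
    rw [Matrix.mul_sub, Matrix.mul_one, hS, ← Matrix.mul_assoc, hΞ, Matrix.one_mul]
  have hS1 : S - 1 = V * diagonal (fun k => μ k - 1) * Vᵀ := by
    have : diagonal (fun k => μ k - 1) = diagonal μ - 1 := by
      rw [← Matrix.diagonal_one, Matrix.diagonal_sub]
    rw [this, Matrix.mul_sub, Matrix.mul_one, Matrix.sub_mul, hV1, ← hSVD]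
  have hPartI : spec (A - Ξ) ≤ 1 - t := by
    rw [spec_eq_norm, hAΞ]
    have hdiag : ‖(diagonal (fun k => μ k - 1) : Matrix (Fin d) (Fin d) ℝ)‖ ≤ 1 - t :=
      spec_diagonal_le _ _ (by linarith) fun k => by
        rw [abs_of_nonpos (by linarith [hμle k])]
        have := hmin' k (Finset.mem_univ k)
        linarith
    calc ‖Ξ * (S - 1)‖ ≤ ‖Ξ‖ * ‖S - 1‖ := Matrix.l2_opNorm_mul _ _
    _ ≤ ‖S - 1‖ := by nlinarith [norm_nonneg (S - 1), norm_nonneg Ξ]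
    _ = ‖V * diagonal (fun k => μ k - 1) * Vᵀ‖ := by rw [hS1]
    _ ≤ ‖V * diagonal (fun k => μ k - 1)‖ * ‖Vᵀ‖ := Matrix.l2_opNorm_mul _ _
    _ ≤ ‖V * diagonal (fun k => μ k - 1)‖ := by
        nlinarith [norm_nonneg (V * diagonal (fun k => μ k - 1)), norm_nonneg Vᵀ]
    _ ≤ ‖V‖ * ‖(diagonal (fun k => μ k - 1) : Matrix (Fin d) (Fin d) ℝ)‖ :=
        Matrix.l2_opNorm_mul _ _
    _ ≤ 1 - t := by
        nlinarith [norm_nonneg V,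
          norm_nonneg (diagonal (fun k => μ k - 1) : Matrix (Fin d) (Fin d) ℝ)]
  -- Part II : 1 - t^2 ≤ sinTheta^2
  set M : Matrix (Fin p) (Fin p) ℝ := (1 - U * Uᵀ) * (Uhat * Uhatᵀ) with hM
  set x : Fin p → ℝ := Uhat *ᵥ y i₀ with hx
  have hxdot : l2 x = 1 := by
    rw [hx, l2_eq_sqrt_dot, mulVec_dot, Matrix.mulVec_mulVec, hUhat, Matrix.one_mulVec,
      hydot i₀, Real.sqrt_one]
  have hMUhat : M * Uhat = Uhat - U * A := by
    calc M * Uhat = (1 - U * Uᵀ) * (Uhat * (Uhatᵀ * Uhat)) := by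
          rw [hM]; simp only [Matrix.mul_assoc]
    _ = (1 - U * Uᵀ) * Uhat := by rw [hUhat, Matrix.mul_one]
    _ = Uhat - U * A := by rw [Matrix.sub_mul, Matrix.one_mul, hA, Matrix.mul_assoc]
  have hMx : M *ᵥ x = (Uhat - U * A) *ᵥ y i₀ := by
    rw [hx, Matrix.mulVec_mulVec, hMUhat]
  have hAtA : Aᵀ * A = S * S := by
    have h1 : Aᵀ * Ξ = S := by
      have h2 : (Ξᵀ * A)ᵀ = Aᵀ * Ξ := by
        rw [Matrix.transpose_mul, Matrix.transpose_transpose]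
      rw [← h2, ← hS]
      exact hsym
    calc Aᵀ * A = Aᵀ * (Ξ * Ξᵀ) * A := by rw [hΞ, Matrix.mul_one]
    _ = (Aᵀ * Ξ) * (Ξᵀ * A) := by simp only [Matrix.mul_assoc]
    _ = S * S := by rw [h1, ← hS]
  have hBB : (Uhat - U * A)ᵀ * (Uhat - U * A) = 1 - S * S := by
    have hUtUhat : Uhatᵀ * U = Aᵀ := by rw [hA, Matrix.transpose_mul, Matrix.transpose_transpose]
    rw [Matrix.transpose_sub, Matrix.transpose_mul, Matrix.sub_mul, Matrix.mul_sub,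
      Matrix.mul_sub, hUhat]
    rw [← hAtA]
    have e1 : Uhatᵀ * (U * A) = Aᵀ * A := by rw [← Matrix.mul_assoc, hUtUhat]
    have e2 : Aᵀ * Uᵀ * Uhat = Aᵀ * A := by rw [Matrix.mul_assoc, ← hA]
    have e3 : Aᵀ * Uᵀ * (U * A) = Aᵀ * A := by
      calc Aᵀ * Uᵀ * (U * A) = Aᵀ * (Uᵀ * U) * A := by simp only [Matrix.mul_assoc]
      _ = Aᵀ * A := by rw [hU, Matrix.mul_one]
    rw [e1, e2, e3]
    abel
  have hval : l2 (M *ᵥ x) ^ 2 = 1 - t ^ 2 := by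
    rw [hMx, l2_mulVec_sq, hBB]
    have : (1 - S * S) *ᵥ y i₀ = y i₀ - (t ^ 2) • y i₀ := by
      rw [Matrix.sub_mulVec, Matrix.one_mulVec, ← Matrix.mulVec_mulVec, hSy i₀,
        Matrix.mulVec_smul, hSy i₀, smul_smul, sq]
    rw [this, dotProduct_sub, dotProduct_smul, hydot i₀]
    simp
  have hPartII : 1 - t ^ 2 ≤ sinTheta Uhat U ^ 2 := by
    have h1 : Real.sqrt (1 - t ^ 2) ≤ sinTheta Uhat U := by
      have := le_spec M x hxdot
      rw [sinTheta, ← hM]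
      refine le_trans ?_ this
      rw [← hval, Real.sqrt_sq (l2_nonneg _)]
    have h2 : (0:ℝ) ≤ 1 - t ^ 2 := by nlinarith
    calc 1 - t ^ 2 = Real.sqrt (1 - t ^ 2) ^ 2 := (Real.sq_sqrt h2).symm
    _ ≤ sinTheta Uhat U ^ 2 := by
        have := Real.sqrt_nonneg (1 - t ^ 2)
        nlinarith
  calc spec (A - Ξ) ≤ 1 - t := hPartI
  _ ≤ 1 - t ^ 2 := by nlinarith
  _ ≤ sinTheta Uhat U ^ 2 := hPartII
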